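/- Let X be the projective rational curve of genus 2 obtained by gluing X₁ = Spec k[t³,t⁴,t⁵] and X₂ = Spec k[s] along t = s⁻¹, with unibranch non-Gorenstein singularity p₀ corresponding to the maximal ideal (t³,t⁴,t⁵). Then deg(p₀) = 1 but deg(−p₀) = −2; equivalently, the dual sheaf L(p₀) = Hom(I_{p₀}, O_X) is the submodule of K generated by 1, t, t² on X₁ and by 1 on X₂, and has degree 2. -/

import Mathlib

/-!
STATEMENT 12: Let X be the projective rational genus 2 curve glued from
X₁ = Spec k[t³,t⁴,t⁵] and X₂ = Spec k[s] along t = s⁻¹, with unibranch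
non-Gorenstein singularity p₀ given by the maximal ideal m = (t³,t⁴,t⁵).
Then deg(p₀) = 1 but deg(-p₀) = -2: the sheaf L(p₀) = Hom(I_{p₀}, O_X) is the
submodule of K generated by 1, t, t² on X₁ and by 1 on X₂, and it has degree 2.

We work in F = k(t) = `RatFunc k` with T = t.  X is covered by the two affine
charts with coordinate rings O₁ = k[t³,t⁴,t⁵] and O₂ = k[t⁻¹], and a subsheaf
of K is recorded by its modules of sections over the two charts.  The ideal
sheaf I_{p₀} has sections m over X₁ and O₂ over X₂.  The claims:
(1) {f : f·m ⊆ O₁} = O₁·⟨1,t,t²⟩ and (2) {f : f·O₂ ⊆ O₂} = O₂, computing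
L(p₀) on the two charts;
(3) dim_k O₁/m = 1, i.e. deg p₀ = 1 (the colength of I_{p₀} in O_X);
(4) dim_k L(p₀)/O₁ = 2 (the chart X₂ contributing 0 by (2)), i.e.
χ(I_{-p₀}) - χ(O_X) = 2, so deg(-p₀) = -2 and deg L(p₀) = 2 ≠ deg p₀.
-/

open Submodule

set_option synthInstance.maxHeartbeats 1000000
set_option maxHeartbeats 1000000

variable (k : Type*) [Field k]

noncomputable abbrev g2T : RatFunc k := RatFunc.X

/-- O₁ = k[t³,t⁴,t⁵], the coordinate ring of the singular chart X₁. -/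
noncomputable def g2O1 : Subalgebra k (RatFunc k) :=
  Algebra.adjoin k {g2T k ^ 3, g2T k ^ 4, g2T k ^ 5}

/-- O₂ = k[s] = k[t⁻¹], the coordinate ring of the chart X₂ at infinity. -/
noncomputable def g2O2 : Subalgebra k (RatFunc k) :=
  Algebra.adjoin k {(g2T k)⁻¹}

/-- m = (t³,t⁴,t⁵) ⊆ O₁, the ideal of the singular point p₀. -/
noncomputable def g2m : Submodule (g2O1 k) (RatFunc k) :=
  Submodule.span (g2O1 k) {g2T k ^ 3, g2T k ^ 4, g2T k ^ 5}

/-- The dual (inverse) module {f ∈ k(t) : f·I ⊆ S} of a module of sections I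
over a chart with coordinate ring S; this computes L(D) = Hom(I_D, O_X)
chartwise. -/
noncomputable def g2dual (S : Subalgebra k (RatFunc k)) (I : Submodule S (RatFunc k)) :
    Submodule S (RatFunc k) where
  carrier := {f | ∀ x ∈ I, f * x ∈ S}
  add_mem' := fun {a b} ha hb x hx => by
    simp only [Set.mem_setOf_eq] at *
    simpa [add_mul] using add_mem (ha x hx) (hb x hx)
  zero_mem' := fun x hx => by simpa using S.zero_mem
  smul_mem' := fun c f hf x hx => by
    simpa [Algebra.smul_def, mul_assoc] using mul_mem c.2 (hf x hx)

-- ==================== auxiliary development ====================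


lemma mem_g2dual {S : Subalgebra k (RatFunc k)} {I : Submodule S (RatFunc k)}
    {f : RatFunc k} : f ∈ g2dual k S I ↔ ∀ x ∈ I, f * x ∈ S := Iff.rfl

/-- The `i`-th Laurent coefficient, as a `k`-linear functional on `k(t)`. -/
noncomputable def g2cf (i : ℤ) : RatFunc k →ₗ[k] k where
  toFun f := (f : LaurentSeries k).coeff i
  map_add' f g := by simp [map_add]
  map_smul' c f := by rw [RatFunc.smul_eq_C_mul, map_mul, ← RatFunc.algebraMap_C,
    ← IsScalarTower.algebraMap_apply, HahnSeries.algebraMap_apply',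
    PowerSeries.algebraMap_apply', Polynomial.coe_C, PowerSeries.map_C, Algebra.algebraMap_self,
    RingHom.id_apply, HahnSeries.ofPowerSeries_C, HahnSeries.C_mul_eq_smul,
    HahnSeries.coeff_smul, smul_eq_mul]

lemma g2cf_pow (i : ℤ) (n : ℕ) :
    g2cf k i (g2T k ^ n) = if i = (n : ℤ) then 1 else 0 := by
  simp only [g2cf, LinearMap.coe_mk, AddHom.coe_mk]
  rw [map_pow, RatFunc.coe_X, HahnSeries.single_pow]
  simp [HahnSeries.coeff_single]

lemma g2cf_mul_X (f : RatFunc k) (i : ℤ) :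
    g2cf k (i + 1) (f * g2T k) = g2cf k i f := by
  simp only [g2cf, LinearMap.coe_mk, AddHom.coe_mk]
  rw [map_mul, RatFunc.coe_X]
  exact (HahnSeries.coeff_mul_single_add).trans (mul_one _)

/-- monomials spanning O₁ -/
def g2sO1 : Set (RatFunc k) := {x | ∃ n : ℕ, (n = 0 ∨ 3 ≤ n) ∧ x = g2T k ^ n}
/-- monomials spanning m -/
def g2sM : Set (RatFunc k) := {x | ∃ n : ℕ, 3 ≤ n ∧ x = g2T k ^ n}
/-- monomials spanning k[t] -/
def g2sP : Set (RatFunc k) := Set.range (fun n : ℕ => g2T k ^ n)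

lemma g2pow_mem_O1 : ∀ n : ℕ, 3 ≤ n → g2T k ^ n ∈ g2O1 k := by
  intro n
  induction n using Nat.strong_induction_on with
  | _ n ih =>
    intro hn
    rcases Nat.lt_or_ge n 6 with h | h
    · interval_cases n
      · exact Algebra.subset_adjoin (by simp [g2O1])
      · exact Algebra.subset_adjoin (by simp [g2O1])
      · exact Algebra.subset_adjoin (by simp [g2O1])
    · have he : g2T k ^ n = g2T k ^ (n - 3) * g2T k ^ 3 := by
        rw [← pow_add]; congr 1; omega
      rw [he]
      exact mul_mem (ih (n - 3) (by omega) (by omega))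
        (Algebra.subset_adjoin (by simp))

lemma g2span_mul_mem {s t u : Set (RatFunc k)}
    (h : ∀ x ∈ s, ∀ y ∈ t, x * y ∈ span k u) :
    ∀ x ∈ span k s, ∀ y ∈ span k t, x * y ∈ span k u := by
  intro x hx y hy
  have hxy : x * y ∈ span k s * span k t := Submodule.mul_mem_mul hx hy
  rw [Submodule.span_mul_span] at hxy
  refine Submodule.span_le.mpr ?_ hxy
  rintro _ ⟨a, ha, b, hb, rfl⟩
  exact h a ha b hb

lemma g2O1_eq : Subalgebra.toSubmodule (g2O1 k) = span k (g2sO1 k) := by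
  apply le_antisymm
  · intro x hx
    rw [Subalgebra.mem_toSubmodule] at hx
    induction hx using Algebra.adjoin_induction with
    | mem y hy =>
      rcases hy with h | h | h
      · exact subset_span ⟨3, Or.inr (by omega), h⟩
      · exact subset_span ⟨4, Or.inr (by omega), h⟩
      · exact subset_span ⟨5, Or.inr (by omega), h⟩
    | algebraMap c =>
      have : algebraMap k (RatFunc k) c = c • g2T k ^ 0 := by
        rw [pow_zero, Algebra.algebraMap_eq_smul_one]
      rw [this]
      exact smul_mem _ _ (subset_span ⟨0, Or.inl rfl, rfl⟩)
    | add x y hx hy ihx ihy => exact add_mem ihx ihy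
    | mul x y hx hy ihx ihy =>
      refine g2span_mul_mem k ?_ x ihx y ihy
      rintro _ ⟨a, ha, rfl⟩ _ ⟨b, hb, rfl⟩
      rw [← pow_add]
      exact subset_span ⟨a + b, by omega, rfl⟩
  · rw [span_le]
    rintro _ ⟨n, hn, rfl⟩
    rw [SetLike.mem_coe, Subalgebra.mem_toSubmodule]
    rcases hn with h0 | h3
    · subst h0; simpa using (g2O1 k).one_mem
    · exact g2pow_mem_O1 k n h3

lemma g2coe_mem_span_O1 (c : g2O1 k) : (c : RatFunc k) ∈ span k (g2sO1 k) :=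
  g2O1_eq k ▸ (Subalgebra.mem_toSubmodule _).mpr c.2

lemma g2pow_mem_m : ∀ n : ℕ, 3 ≤ n → g2T k ^ n ∈ g2m k := by
  intro n
  induction n using Nat.strong_induction_on with
  | _ n ih =>
    intro hn
    rcases Nat.lt_or_ge n 6 with h | h
    · interval_cases n
      · exact subset_span (by simp [g2m])
      · exact subset_span (by simp [g2m])
      · exact subset_span (by simp [g2m])
    · have hmem : (⟨g2T k ^ (n - 3), g2pow_mem_O1 k _ (by omega)⟩ : g2O1 k) • (g2T k ^ 3)
          ∈ g2m k := smul_mem _ _ (subset_span (by simp [g2m]))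
      have he : (⟨g2T k ^ (n - 3), g2pow_mem_O1 k _ (by omega)⟩ : g2O1 k) • (g2T k ^ 3)
          = g2T k ^ n := by
        rw [Subalgebra.smul_def, smul_eq_mul, ← pow_add]
        congr 1; omega
      rwa [he] at hmem

lemma g2m_eq : (g2m k).restrictScalars k = span k (g2sM k) := by
  apply le_antisymm
  · intro x hx
    rw [restrictScalars_mem] at hx
    induction hx using Submodule.span_induction with
    | mem y hy =>
      rcases hy with h | h | h
      · exact subset_span ⟨3, by omega, h⟩
      · exact subset_span ⟨4, by omega, h⟩
      · exact subset_span ⟨5, by omega, h⟩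
    | zero => exact zero_mem _
    | add x y hx hy ihx ihy => exact add_mem ihx ihy
    | smul c x hx ih =>
      rw [Subalgebra.smul_def, smul_eq_mul]
      refine g2span_mul_mem k ?_ _ (g2coe_mem_span_O1 k c) x ih
      rintro _ ⟨a, ha, rfl⟩ _ ⟨b, hb, rfl⟩
      rw [← pow_add]
      exact subset_span ⟨a + b, by omega, rfl⟩
  · rw [span_le]
    rintro _ ⟨n, hn, rfl⟩
    rw [SetLike.mem_coe, restrictScalars_mem]
    exact g2pow_mem_m k n hn

lemma g2cf_span_zero (i : ℤ) (s : Set (RatFunc k)) (h : ∀ x ∈ s, g2cf k i x = 0) :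
    ∀ x ∈ span k s, g2cf k i x = 0 := by
  intro x hx
  induction hx using Submodule.span_induction with
  | mem x hx => exact h x hx
  | zero => simp
  | add x y hx hy ihx ihy => rw [map_add, ihx, ihy, add_zero]
  | smul c x hx ih => rw [map_smul, ih, smul_zero]

lemma g2cf_O1 (i : ℤ) (hi : i = 1 ∨ i = 2) :
    ∀ x ∈ span k (g2sO1 k), g2cf k i x = 0 := by
  refine g2cf_span_zero k i _ ?_
  rintro _ ⟨n, hn, rfl⟩
  rw [g2cf_pow]
  exact if_neg (by omega)

lemma g2cf_M (i : ℤ) (hi : i ≤ 2) :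
    ∀ x ∈ span k (g2sM k), g2cf k i x = 0 := by
  refine g2cf_span_zero k i _ ?_
  rintro _ ⟨n, hn, rfl⟩
  rw [g2cf_pow]
  exact if_neg (by omega)

lemma g2cf_one : g2cf k 0 (1 : RatFunc k) = 1 := by
  simpa using g2cf_pow k 0 0

/-- O₁-span decomposition: constants plus m. -/
lemma g2O1span_le : span k (g2sO1 k) ≤ span k {(1 : RatFunc k)} ⊔ span k (g2sM k) := by
  rw [span_le]
  rintro _ ⟨n, hn, rfl⟩
  rcases hn with h0 | h3
  · subst h0
    rw [pow_zero]
    exact SetLike.mem_coe.mpr (mem_sup_left (mem_span_singleton_self 1))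
  · exact SetLike.mem_coe.mpr (mem_sup_right (subset_span ⟨n, h3, rfl⟩))

/-- elements of O₁ with vanishing constant coefficient lie in m -/
lemma g2mem_m_of_cf0 (x : RatFunc k) (hx : x ∈ span k (g2sO1 k))
    (h0 : g2cf k 0 x = 0) : x ∈ span k (g2sM k) := by
  rcases mem_sup.mp (g2O1span_le k hx) with ⟨u, hu, v, hv, huv⟩
  rcases mem_span_singleton.mp hu with ⟨a, rfl⟩
  have hcf : g2cf k 0 x = a := by
    rw [← huv, map_add, map_smul, g2cf_one, g2cf_M k 0 (by omega) v hv,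
      add_zero, smul_eq_mul, mul_one]
  have ha : a = 0 := by rw [← hcf, h0]
  rw [← huv, ha, zero_smul, zero_add]
  exact hv

lemma g2M_mul_inv : ∀ x ∈ span k (g2sM k), x * (g2T k ^ 3)⁻¹ ∈ span k (g2sP k) := by
  have hT3 : (g2T k ^ 3 : RatFunc k) ≠ 0 := pow_ne_zero _ RatFunc.X_ne_zero
  intro x hx
  induction hx using Submodule.span_induction with
  | mem x hx =>
    rcases hx with ⟨n, hn, rfl⟩
    have he : g2T k ^ n = g2T k ^ (n - 3) * g2T k ^ 3 := by
      rw [← pow_add]; congr 1; omega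
    rw [he, mul_assoc, mul_inv_cancel₀ hT3, mul_one]
    exact subset_span ⟨n - 3, rfl⟩
  | zero => simp
  | add x y hx hy ihx ihy => rw [add_mul]; exact add_mem ihx ihy
  | smul c x hx ih => rw [smul_mul_assoc]; exact smul_mem _ _ ih

lemma g2dual_le_P : ∀ f ∈ g2dual k (g2O1 k) (g2m k), f ∈ span k (g2sP k) := by
  intro f hf
  have h3 : g2T k ^ 3 ∈ g2m k := subset_span (by simp [g2m])
  have h4 : g2T k ^ 4 ∈ g2m k := subset_span (by simp [g2m])
  have hp : f * g2T k ^ 3 ∈ g2O1 k := hf _ h3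
  have hq : f * g2T k ^ 4 ∈ g2O1 k := hf _ h4
  have hpO : f * g2T k ^ 3 ∈ span k (g2sO1 k) :=
    g2O1_eq k ▸ (Subalgebra.mem_toSubmodule _).mpr hp
  have hqO : f * g2T k ^ 4 ∈ span k (g2sO1 k) :=
    g2O1_eq k ▸ (Subalgebra.mem_toSubmodule _).mpr hq
  have hc0 : g2cf k 0 (f * g2T k ^ 3) = 0 := by
    have h1 : g2cf k 1 (f * g2T k ^ 4) = 0 := g2cf_O1 k 1 (Or.inl rfl) _ hqO
    have h2 : f * g2T k ^ 4 = (f * g2T k ^ 3) * g2T k := by ring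
    have h3' : g2cf k (0 + 1) ((f * g2T k ^ 3) * g2T k) = g2cf k 0 (f * g2T k ^ 3) :=
      g2cf_mul_X k _ 0
    rw [← h3']
    rw [← h2] at *
    simpa using h1
  have hM : f * g2T k ^ 3 ∈ span k (g2sM k) := g2mem_m_of_cf0 k _ hpO hc0
  have hT3 : (g2T k ^ 3 : RatFunc k) ≠ 0 := pow_ne_zero _ RatFunc.X_ne_zero
  have hfp : f = (f * g2T k ^ 3) * (g2T k ^ 3)⁻¹ := by
    rw [mul_assoc, mul_inv_cancel₀ hT3, mul_one]
  rw [hfp]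
  exact g2M_mul_inv k _ hM

lemma g2span123_eq : (span (g2O1 k) {1, g2T k, g2T k ^ 2}).restrictScalars k
    = span k (g2sP k) := by
  apply le_antisymm
  · intro x hx
    rw [restrictScalars_mem] at hx
    induction hx using Submodule.span_induction with
    | mem y hy =>
      rcases hy with h | h | h
      · subst h; exact subset_span ⟨0, by simp⟩
      · subst h; exact subset_span ⟨1, by simp⟩
      · subst h; exact subset_span ⟨2, rfl⟩
    | zero => exact zero_mem _
    | add x y hx hy ihx ihy => exact add_mem ihx ihy
    | smul c x hx ih =>
      rw [Subalgebra.smul_def, smul_eq_mul]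
      refine g2span_mul_mem k ?_ _ (g2coe_mem_span_O1 k c) x ih
      rintro _ ⟨a, ha, rfl⟩ _ ⟨b, rfl⟩
      rw [← pow_add]
      exact subset_span ⟨a + b, rfl⟩
  · rw [span_le]
    rintro _ ⟨n, rfl⟩
    rw [SetLike.mem_coe, restrictScalars_mem]
    simp only []
    rcases Nat.lt_or_ge n 3 with h | h
    · interval_cases n
      · rw [pow_zero]; exact subset_span (by simp)
      · rw [pow_one]; exact subset_span (by simp)
      · exact subset_span (by simp)
    · have hmem : (⟨g2T k ^ n, g2pow_mem_O1 k n h⟩ : g2O1 k) • (1 : RatFunc k)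
          ∈ span (g2O1 k) {1, g2T k, g2T k ^ 2} :=
        smul_mem _ _ (subset_span (Set.mem_insert _ _))
      simpa [Subalgebra.smul_def, smul_eq_mul] using hmem

lemma g2dual_eq_span123 : g2dual k (g2O1 k) (g2m k)
    = span (g2O1 k) {1, g2T k, g2T k ^ 2} := by
  apply le_antisymm
  · intro f hf
    have h1 : f ∈ span k (g2sP k) := g2dual_le_P k f hf
    have h2 : f ∈ (span (g2O1 k) {1, g2T k, g2T k ^ 2}).restrictScalars k := by
      rw [g2span123_eq]; exact h1
    rwa [restrictScalars_mem] at h2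
  · rw [span_le]
    have key : ∀ i : ℕ, i ≤ 2 → (g2T k ^ i) ∈ g2dual k (g2O1 k) (g2m k) := by
      intro i hi
      rw [mem_g2dual]
      intro y hy
      have hy' : y ∈ span k (g2sM k) := by
        rw [← g2m_eq, restrictScalars_mem]; exact hy
      clear hy
      induction hy' using Submodule.span_induction with
      | mem z hz =>
        rcases hz with ⟨n, hn, rfl⟩
        rw [← pow_add]
        exact g2pow_mem_O1 k _ (by omega)
      | zero => rw [mul_zero]; exact zero_mem _
      | add a b ha hb iha ihb => rw [mul_add]; exact add_mem iha ihb
      | smul c a ha ih => rw [mul_smul_comm]; exact SMulMemClass.smul_mem c ih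
    rintro x (h | h | h)
    · subst h
      simpa using key 0 (by omega)
    · subst h
      simpa using key 1 (by omega)
    · subst h
      exact key 2 (by omega)

lemma g2part2 : g2dual k (g2O2 k) (span (g2O2 k) {1}) = span (g2O2 k) {1} := by
  apply le_antisymm
  · intro f hf
    have h1 : (1 : RatFunc k) ∈ span (g2O2 k) {1} := subset_span rfl
    have hfO : f ∈ g2O2 k := by
      have := hf 1 h1
      rwa [mul_one] at this
    exact mem_span_singleton.mpr ⟨⟨f, hfO⟩, by
      rw [Subalgebra.smul_def, smul_eq_mul, mul_one]⟩
  · intro f hf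
    rw [mem_g2dual]
    intro y hy
    rcases mem_span_singleton.mp hf with ⟨c, rfl⟩
    rcases mem_span_singleton.mp hy with ⟨d, rfl⟩
    have he : (c • (1 : RatFunc k)) * (d • (1 : RatFunc k)) = ((c * d : g2O2 k) : RatFunc k) := by
      rw [Subalgebra.smul_def, Subalgebra.smul_def, smul_eq_mul, smul_eq_mul]
      push_cast
      ring
    rw [he]
    exact (c * d).2

/-- spanning monomials of k[t] decompose as t,t² plus O₁-part -/
lemma g2Pspan_le : span k (g2sP k) ≤ span k {g2T k, g2T k ^ 2} ⊔ span k (g2sO1 k) := by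
  rw [span_le]
  rintro _ ⟨n, rfl⟩
  simp only []
  rcases Nat.lt_or_ge n 3 with h | h
  · interval_cases n
    · exact SetLike.mem_coe.mpr (mem_sup_right (subset_span ⟨0, Or.inl rfl, rfl⟩))
    · exact SetLike.mem_coe.mpr (mem_sup_left (subset_span (by rw [pow_one]; simp)))
    · exact SetLike.mem_coe.mpr (mem_sup_left (subset_span (by simp)))
  · exact SetLike.mem_coe.mpr (mem_sup_right (subset_span ⟨n, Or.inr h, rfl⟩))

lemma g2cf_T : g2cf k 1 (g2T k) = 1 := by
  have := g2cf_pow k 1 1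
  simpa using this

lemma g2cf_T2 : g2cf k 2 (g2T k ^ 2) = 1 := by
  have := g2cf_pow k 2 2
  simpa using this

lemma g2cf_T2_1 : g2cf k 1 (g2T k ^ 2) = 0 := by
  have := g2cf_pow k 1 2
  simpa using this

lemma g2cf_T_2 : g2cf k 2 (g2T k) = 0 := by
  have := g2cf_pow k 2 1
  simpa using this

/-- elements of k[t] with vanishing t and t² coefficients lie in O₁ -/
lemma g2mem_O1_of_cf (x : RatFunc k) (hx : x ∈ span k (g2sP k))
    (h1 : g2cf k 1 x = 0) (h2 : g2cf k 2 x = 0) : x ∈ span k (g2sO1 k) := by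
  rcases mem_sup.mp (g2Pspan_le k hx) with ⟨u, hu, v, hv, huv⟩
  rcases mem_span_pair.mp hu with ⟨a, b, rfl⟩
  have hc1 : g2cf k 1 x = a := by
    rw [← huv, map_add, map_add, map_smul, map_smul, g2cf_T, g2cf_T2_1,
      g2cf_O1 k 1 (Or.inl rfl) v hv, smul_eq_mul, smul_eq_mul]
    ring
  have hc2 : g2cf k 2 x = b := by
    rw [← huv, map_add, map_add, map_smul, map_smul, g2cf_T_2, g2cf_T2,
      g2cf_O1 k 2 (Or.inr rfl) v hv, smul_eq_mul, smul_eq_mul]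
    ring
  have ha : a = 0 := by rw [← hc1, h1]
  have hb : b = 0 := by rw [← hc2, h2]
  rw [← huv, ha, hb, zero_smul, zero_smul, zero_add, zero_add]
  exact hv

lemma g2part3 :
    Module.finrank k
      (↥(Subalgebra.toSubmodule (g2O1 k)) ⧸
        (Submodule.comap (Subalgebra.toSubmodule (g2O1 k)).subtype
          ((g2m k).restrictScalars k))) = 1 := by
  set M := Subalgebra.toSubmodule (g2O1 k)
  set N := Submodule.comap M.subtype ((g2m k).restrictScalars k)
  set φ : M →ₗ[k] k := (g2cf k 0).comp M.subtype with hφ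
  have hsurj : Function.Surjective φ := by
    intro c
    refine ⟨c • ⟨1, (Subalgebra.mem_toSubmodule _).mpr (g2O1 k).one_mem⟩, ?_⟩
    rw [map_smul]
    have : φ ⟨1, (Subalgebra.mem_toSubmodule _).mpr (g2O1 k).one_mem⟩ = 1 := by
      simp [hφ, g2cf_one]
    rw [this, smul_eq_mul, mul_one]
  have hker : LinearMap.ker φ = N := by
    ext ⟨x, hx⟩
    simp only [LinearMap.mem_ker, hφ, LinearMap.comp_apply, Submodule.coe_subtype, mem_comap,
      restrictScalars_mem, N]
    constructor
    · intro h0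
      have hx' : x ∈ span k (g2sO1 k) := g2O1_eq k ▸ hx
      have := g2mem_m_of_cf0 k x hx' h0
      have h2 : x ∈ (g2m k).restrictScalars k := by rw [g2m_eq]; exact this
      rwa [restrictScalars_mem] at h2
    · intro h
      have h2 : x ∈ span k (g2sM k) := by
        rw [← g2m_eq, restrictScalars_mem]; exact h
      exact g2cf_M k 0 (by omega) x h2
  have e : (M ⧸ N) ≃ₗ[k] k :=
    (Submodule.quotEquivOfEq N (LinearMap.ker φ) hker.symm).trans
      (φ.quotKerEquivOfSurjective hsurj)
  rw [e.finrank_eq]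
  exact Module.finrank_self k

lemma g2part4 :
    Module.finrank k
      (↥((g2dual k (g2O1 k) (g2m k)).restrictScalars k) ⧸
        (Submodule.comap ((g2dual k (g2O1 k) (g2m k)).restrictScalars k).subtype
          (Subalgebra.toSubmodule (g2O1 k)))) = 2 := by
  set D := (g2dual k (g2O1 k) (g2m k)).restrictScalars k with hD
  set N := Submodule.comap D.subtype (Subalgebra.toSubmodule (g2O1 k)) with hN
  have hTmem : g2T k ∈ D := by
    rw [hD, restrictScalars_mem, g2dual_eq_span123]
    exact subset_span (by simp)
  have hT2mem : g2T k ^ 2 ∈ D := by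
    rw [hD, restrictScalars_mem, g2dual_eq_span123]
    exact subset_span (by simp)
  set ψ : D →ₗ[k] k × k :=
    ((g2cf k 1).comp D.subtype).prod ((g2cf k 2).comp D.subtype) with hψ
  have happ : ∀ x : D, ψ x = (g2cf k 1 x.1, g2cf k 2 x.1) := fun x => rfl
  have hsurj : Function.Surjective ψ := by
    rintro ⟨a, b⟩
    refine ⟨a • ⟨g2T k, hTmem⟩ + b • ⟨g2T k ^ 2, hT2mem⟩, ?_⟩
    rw [happ]
    have hval : ((a • (⟨g2T k, hTmem⟩ : D) + b • ⟨g2T k ^ 2, hT2mem⟩ : D) : RatFunc k)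
        = a • g2T k + b • g2T k ^ 2 := rfl
    rw [hval]
    simp only [map_add, map_smul, g2cf_T, g2cf_T2, g2cf_T2_1, g2cf_T_2,
      smul_eq_mul, mul_one, mul_zero, add_zero, zero_add]
  have hker : LinearMap.ker ψ = N := by
    ext ⟨x, hx⟩
    rw [LinearMap.mem_ker, happ]
    simp only [hN, mem_comap, Submodule.coe_subtype, Subalgebra.mem_toSubmodule, Prod.mk_eq_zero]
    constructor
    · rintro ⟨h1, h2⟩
      have hxP : x ∈ span k (g2sP k) := by
        have hx' : x ∈ g2dual k (g2O1 k) (g2m k) := by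
          rw [hD, restrictScalars_mem] at hx; exact hx
        exact g2dual_le_P k x hx'
      have := g2mem_O1_of_cf k x hxP h1 h2
      exact (Subalgebra.mem_toSubmodule _).mp (g2O1_eq k ▸ this :)
    · intro h
      have hx' : x ∈ span k (g2sO1 k) := g2O1_eq k ▸ (Subalgebra.mem_toSubmodule _).mpr h
      exact ⟨g2cf_O1 k 1 (Or.inl rfl) x hx', g2cf_O1 k 2 (Or.inr rfl) x hx'⟩
  have e : (D ⧸ N) ≃ₗ[k] k × k :=
    (Submodule.quotEquivOfEq N (LinearMap.ker ψ) hker.symm).trans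
      (ψ.quotKerEquivOfSurjective hsurj)
  rw [e.finrank_eq, Module.finrank_prod, Module.finrank_self]


theorem degree_of_dual_of_singular_point :
    -- (1) L(p₀) on X₁ is the O₁-module generated by 1, t, t²:
    g2dual k (g2O1 k) (g2m k) =
      Submodule.span (g2O1 k) {1, g2T k, g2T k ^ 2} ∧
    -- (2) L(p₀) on X₂ is O₂ (the ideal sheaf of p₀ is trivial on X₂):
    g2dual k (g2O2 k) (Submodule.span (g2O2 k) {1}) = Submodule.span (g2O2 k) {1} ∧
    -- (3) deg(p₀) = 1: the colength of m in O₁ is 1: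
    Module.finrank k
      (↥(Subalgebra.toSubmodule (g2O1 k)) ⧸
        (Submodule.comap (Subalgebra.toSubmodule (g2O1 k)).subtype
          ((g2m k).restrictScalars k))) = 1 ∧
    -- (4) deg(L(p₀)) = 2 (so deg(-p₀) = -2 ≠ -deg(p₀)): L(p₀)/O_X has length 2:
    Module.finrank k
      (↥((g2dual k (g2O1 k) (g2m k)).restrictScalars k) ⧸
        (Submodule.comap ((g2dual k (g2O1 k) (g2m k)).restrictScalars k).subtype
          (Subalgebra.toSubmodule (g2O1 k)))) = 2 := by
  exact ⟨g2dual_eq_span123 k, g2part2 k, g2part3 k, g2part4 k⟩
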